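/- Let T ≥ 1 be an integer and v_1,…,v_T, a ∈ ℝ. Set u := Λ(a+v_T) and ρ_s := e^{v_s−v_T} − 1 for s = 1,…,T−1. Then for every t ∈ {0,1,…,T}: ∑_{k=t}^T binom(T−t, k−t) · e^{k(v_T+a)} / ∏_{s=1}^T (1+e^{v_s+a}) = u^t / ∏_{s=1}^{T−1} (1+u ρ_s). (Here binom denotes the binomial coefficient.) -/

import Mathlib

open Finset

/-- The logistic function `Λ(x) = 1/(1+e^{-x})`. -/
noncomputable def logistic (x : ℝ) : ℝ := 1 / (1 + Real.exp (-x))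

/-- With `T = n + 1 ≥ 1` periods, `u = Λ(a + v_T)` and `ρ_s = e^{v_s - v_T} - 1` for
`s = 1, …, T-1`, one has, for every `t ∈ {0, …, T}`:
`∑_{k=t}^T C(T-t, k-t) e^{k(v_T+a)} / ∏_{s=1}^T (1+e^{v_s+a}) = u^t / ∏_{s=1}^{T-1} (1+u ρ_s)`. -/
theorem c_t_as_moment (n : ℕ) (v : Fin (n + 1) → ℝ) (a : ℝ) (t : ℕ) (ht : t ≤ n + 1) :
    (∑ k ∈ Finset.Icc t (n + 1),
        (Nat.choose (n + 1 - t) (k - t) : ℝ) * Real.exp (k * (v (Fin.last n) + a))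
          / ∏ s, (1 + Real.exp (v s + a)))
      = (logistic (a + v (Fin.last n))) ^ t
        / ∏ s : Fin n,
            (1 + logistic (a + v (Fin.last n))
              * (Real.exp (v s.castSucc - v (Fin.last n)) - 1)) := by
  set E := Real.exp (v (Fin.last n) + a) with hE
  have hEpos : (0:ℝ) < E := Real.exp_pos _
  have h1E : (0:ℝ) < 1 + E := by positivity
  set P := ∏ s : Fin n, (1 + Real.exp (v s.castSucc + a)) with hP
  have hPpos : (0:ℝ) < P := Finset.prod_pos (fun s _ => by positivity)
  have hu : logistic (a + v (Fin.last n)) = E / (1 + E) := by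
    unfold logistic
    rw [hE, show -(a + v (Fin.last n)) = -(v (Fin.last n) + a) by ring, Real.exp_neg]
    rw [← hE]
    field_simp
    ring
  have hsum : (∑ k ∈ Finset.Icc t (n + 1),
        (Nat.choose (n + 1 - t) (k - t) : ℝ) * Real.exp (k * (v (Fin.last n) + a)))
      = E ^ t * (1 + E) ^ (n + 1 - t) := by
    rw [← Finset.Ico_add_one_right_eq_Icc, Finset.sum_Ico_eq_sum_range]
    have h2 : n + 1 + 1 - t = (n + 1 - t) + 1 := by omega
    rw [h2]
    have hpow : (1 + E) ^ (n + 1 - t)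
        = ∑ i ∈ range (n + 1 - t + 1), (Nat.choose (n + 1 - t) i : ℝ) * E ^ i := by
      rw [add_comm 1 E, add_pow]
      exact Finset.sum_congr rfl fun i _ => by ring
    rw [hpow, Finset.mul_sum]
    apply Finset.sum_congr rfl
    intro i _
    have hc : ((t + i : ℕ) : ℝ) * (v (Fin.last n) + a)
        = (t : ℕ) * (v (Fin.last n) + a) + (i : ℕ) * (v (Fin.last n) + a) := by
      push_cast; ring
    rw [Nat.add_sub_cancel_left, hc, Real.exp_add, Real.exp_nat_mul, Real.exp_nat_mul, ← hE]
    ring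
  have hprod : (∏ s : Fin (n+1), (1 + Real.exp (v s + a))) = P * (1 + E) := by
    rw [Fin.prod_univ_castSucc, hP, hE]
  have hden : (∏ s : Fin n,
      (1 + logistic (a + v (Fin.last n)) * (Real.exp (v s.castSucc - v (Fin.last n)) - 1)))
      = P / (1 + E) ^ n := by
    have hterm : ∀ s : Fin n,
        1 + logistic (a + v (Fin.last n)) * (Real.exp (v s.castSucc - v (Fin.last n)) - 1)
          = (1 + Real.exp (v s.castSucc + a)) / (1 + E) := by
      intro s
      rw [hu]
      have hmul : E * Real.exp (v s.castSucc - v (Fin.last n))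
          = Real.exp (v s.castSucc + a) := by
        rw [hE, ← Real.exp_add]; ring_nf
      field_simp
      linear_combination hmul
    rw [Finset.prod_congr rfl (fun s _ => hterm s), Finset.prod_div_distrib,
      Finset.prod_const, ← hP]
    simp
  rw [← Finset.sum_div, hsum, hprod, hden, hu, div_pow]
  have h1 : (1 + E) ≠ 0 := ne_of_gt h1E
  have h2 : P ≠ 0 := ne_of_gt hPpos
  have hkey : (1 + E) ^ (n + 1 - t) = (1 + E) ^ n * (1 + E) / (1 + E) ^ t := by
    rw [eq_div_iff (pow_ne_zero _ h1), ← pow_add, Nat.sub_add_cancel ht, pow_succ]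
  rw [hkey]
  field_simp
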